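/- arXiv:1812.03159 — 2 statements merged into one kernel-verified Lean document; each statement's English description precedes it below -/
import Mathlib

section
/- The halved n-cube for even n has no cliques of size greater than n; in particular, for n even, any Delsarte clique of the halved n-cube (a clique of size 1 − k/θ_min where k = n(n−1)/2 is the degree and θ_min is the minimum adjacency eigenvalue) has size exactly n. -/
open Finset
open scoped symmDiff

/-- The hypercube graph on binary words indexed by `ι`. -/
def cube (ι : Type*) [Fintype ι] [DecidableEq ι] : SimpleGraph (ι → ZMod 2) where
  Adj x y := hammingDist x y = 1
  symm := ⟨fun x y h => by show hammingDist y x = 1; rw [hammingDist_comm]; exact h⟩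
  loopless := ⟨fun x h => by simp [hammingDist_self] at h⟩

instance (ι : Type*) [Fintype ι] [DecidableEq ι] : DecidableRel (cube ι).Adj :=
  fun x y => inferInstanceAs (Decidable (hammingDist x y = 1))

/-- The halved hypercube: even-weight words, adjacent iff Hamming distance 2. -/
def halvedCube (ι : Type*) [Fintype ι] [DecidableEq ι] :
    SimpleGraph {x : ι → ZMod 2 // Even (hammingDist x 0)} where
  Adj x y := hammingDist x.1 y.1 = 2
  symm := ⟨fun x y h => by show hammingDist y.1 x.1 = 2; rw [hammingDist_comm]; exact h⟩
  loopless := ⟨fun x h => by simp [hammingDist_self] at h⟩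

instance (ι : Type*) [Fintype ι] [DecidableEq ι] : DecidableRel (halvedCube ι).Adj :=
  fun x y => inferInstanceAs (Decidable (hammingDist x.1 y.1 = 2))

variable {V : Type*} [Fintype V] [DecidableEq V]

/-- Number of neighbors of `v` in the set `C`. -/
def nbrCount (G : SimpleGraph V) [DecidableRel G.Adj] (v : V) (C : Finset V) : ℕ :=
  (C.filter (G.Adj v)).card

/-- `(C0, C1)` is an equitable 2-partition with quotient matrix `[[a,b],[c,d]]`. -/
def IsEquitable2 (G : SimpleGraph V) [DecidableRel G.Adj] (C0 C1 : Finset V)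
    (a b c d : ℕ) : Prop :=
  Disjoint C0 C1 ∧ C0 ∪ C1 = Finset.univ ∧
  (∀ v ∈ C0, nbrCount G v C0 = a ∧ nbrCount G v C1 = b) ∧
  (∀ v ∈ C1, nbrCount G v C0 = c ∧ nbrCount G v C1 = d)

/-- `C` is an equitable `k`-partition with quotient matrix `S`. -/
def IsEquitableK (G : SimpleGraph V) [DecidableRel G.Adj] {k : ℕ}
    (C : V → Fin k) (S : Fin k → Fin k → ℕ) : Prop :=
  ∀ (v : V) (j : Fin k),
    (Finset.univ.filter (fun w => G.Adj v w ∧ C w = j)).card = S (C v) j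


lemma star_card_le {n : ℕ} (F : Finset (Finset (Fin n))) (h2 : ∀ A ∈ F, A.card = 2)
    (x : Fin n) (hx : ∀ A ∈ F, x ∈ A) : F.card ≤ n - 1 := by
  classical
  set f : Finset (Fin n) → Fin n := fun A =>
    if h : (A.erase x).Nonempty then (A.erase x).min' h else x with hf
  have hmem : ∀ A ∈ F, A.erase x = {f A} := by
    intro A hA
    have hc : (A.erase x).card = 1 := by
      rw [Finset.card_erase_of_mem (hx A hA), h2 A hA]
    obtain ⟨y, hy⟩ := Finset.card_eq_one.mp hc
    have hne : (A.erase x).Nonempty := by rw [hy]; exact ⟨y, mem_singleton_self y⟩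
    have hmin : f A ∈ A.erase x := by
      simp only [hf, dif_pos hne]
      exact Finset.min'_mem _ hne
    rw [hy] at hmin ⊢
    rw [Finset.mem_singleton] at hmin
    rw [hmin]
  have hA' : ∀ A ∈ F, A = insert x {f A} := by
    intro A hA
    rw [← hmem A hA, Finset.insert_erase (hx A hA)]
  calc F.card ≤ (Finset.univ.erase x).card := by
        apply Finset.card_le_card_of_injOn f
        · intro A hA
          have : f A ∈ A.erase x := by rw [hmem A hA]; exact mem_singleton_self _
          exact Finset.mem_erase.mpr ⟨(Finset.mem_erase.mp this).1, Finset.mem_univ _⟩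
        · intro A hA B hB hfeq
          rw [hA' A hA, hA' B hB, hfeq]
    _ = n - 1 := by rw [Finset.card_erase_of_mem (Finset.mem_univ x), Finset.card_univ,
        Fintype.card_fin]

lemma inter_one {n : ℕ} {A B : Finset (Fin n)} (h : (A ∩ B).card = 1) :
    ∃ e, e ∈ A ∧ e ∈ B ∧ ∀ f, f ∈ A → f ∈ B → f = e := by
  obtain ⟨e, he⟩ := Finset.card_eq_one.mp h
  have he' : e ∈ A ∩ B := he ▸ mem_singleton_self e
  refine ⟨e, (Finset.mem_inter.mp he').1, (Finset.mem_inter.mp he').2, ?_⟩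
  intro f hfA hfB
  have : f ∈ A ∩ B := Finset.mem_inter.mpr ⟨hfA, hfB⟩
  rw [he, Finset.mem_singleton] at this
  exact this

lemma pairs_card_le {n : ℕ} (hn : Even n) (hpos : 0 < n)
    (F : Finset (Finset (Fin n))) (h2 : ∀ A ∈ F, A.card = 2)
    (hint : ∀ A ∈ F, ∀ B ∈ F, A ≠ B → (A ∩ B).card = 1) :
    F.card ≤ n - 1 := by
  classical
  by_cases hstar : ∃ x : Fin n, ∀ A ∈ F, x ∈ A
  · obtain ⟨x, hx⟩ := hstar
    exact star_card_le F h2 x hx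
  · push_neg at hstar
    have x0 : Fin n := ⟨0, hpos⟩
    obtain ⟨A, hA, -⟩ := hstar x0
    obtain ⟨p, q, hpq, hAeq⟩ := Finset.card_eq_two.mp (h2 A hA)
    have hpA : p ∈ A := by rw [hAeq]; simp
    have hqA : q ∈ A := by rw [hAeq]; simp
    obtain ⟨B, hB, hpB⟩ := hstar p
    have hAB : A ≠ B := fun h => hpB (h ▸ hpA)
    obtain ⟨e, heA, heB, -⟩ := inter_one (hint A hA B hB hAB)
    have hqB : q ∈ B := by
      rw [hAeq, Finset.mem_insert, Finset.mem_singleton] at heA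
      rcases heA with h | h
      · exact absurd (h ▸ heB) hpB
      · exact h ▸ heB
    have hBer : (B.erase q).card = 1 := by
      rw [Finset.card_erase_of_mem hqB, h2 B hB]
    obtain ⟨r, hr⟩ := Finset.card_eq_one.mp hBer
    have hrB : r ∈ B := Finset.mem_of_mem_erase (hr ▸ mem_singleton_self r)
    have hrq : r ≠ q := (Finset.mem_erase.mp (hr ▸ mem_singleton_self r)).1
    have hrp : r ≠ p := fun h => hpB (h ▸ hrB)
    have hBeq : B = insert q {r} := by
      rw [← Finset.insert_erase hqB, hr]
    obtain ⟨C, hC, hqC⟩ := hstar q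
    have hAC : A ≠ C := fun h => hqC (h ▸ hqA)
    have hBC : B ≠ C := fun h => hqC (h ▸ hqB)
    have hpC : p ∈ C := by
      obtain ⟨e', heA', heC', -⟩ := inter_one (hint A hA C hC hAC)
      rw [hAeq, Finset.mem_insert, Finset.mem_singleton] at heA'
      rcases heA' with h | h
      · exact h ▸ heC'
      · exact absurd (h ▸ heC') hqC
    have hrC : r ∈ C := by
      obtain ⟨e', heB', heC', -⟩ := inter_one (hint B hB C hC hBC)
      rw [hBeq, Finset.mem_insert, Finset.mem_singleton] at heB'
      rcases heB' with h | h
      · exact absurd (h ▸ heC') hqC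
      · exact h ▸ heC'
    have hCeq : C = insert p {r} := by
      refine (Finset.eq_of_subset_of_card_le ?_ ?_).symm
      · intro z hz
        rw [Finset.mem_insert, Finset.mem_singleton] at hz
        rcases hz with h | h
        · exact h ▸ hpC
        · exact h ▸ hrC
      · rw [h2 C hC, Finset.card_insert_of_notMem (by simp [Ne.symm hrp]),
          Finset.card_singleton]
    have hsub : F ⊆ {A, B, C} := by
      intro D hD
      simp only [Finset.mem_insert, Finset.mem_singleton]
      by_cases hpD : p ∈ D
      · by_cases hqD : q ∈ D
        · left
          refine (Finset.eq_of_subset_of_card_le ?_ ?_).symm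
          · rw [hAeq]
            intro z hz
            rw [Finset.mem_insert, Finset.mem_singleton] at hz
            rcases hz with h | h
            · exact h ▸ hpD
            · exact h ▸ hqD
          · rw [h2 D hD, hAeq, Finset.card_insert_of_notMem (by simp [hpq]),
              Finset.card_singleton]
        · right; right
          have hDB : D ≠ B := fun h => hqD (h ▸ hqB)
          have hrD : r ∈ D := by
            obtain ⟨e', heD', heB', -⟩ := inter_one (hint D hD B hB hDB)
            rw [hBeq, Finset.mem_insert, Finset.mem_singleton] at heB'
            rcases heB' with h | h
            · exact absurd (h ▸ heD') hqD
            · exact h ▸ heD'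
          rw [hCeq]
          refine (Finset.eq_of_subset_of_card_le ?_ ?_).symm
          · intro z hz
            rw [Finset.mem_insert, Finset.mem_singleton] at hz
            rcases hz with h | h
            · exact h ▸ hpD
            · exact h ▸ hrD
          · rw [h2 D hD, Finset.card_insert_of_notMem (by simp [Ne.symm hrp]),
              Finset.card_singleton]
      · right; left
        have hDA : D ≠ A := fun h => hpD (h ▸ hpA)
        have hqD : q ∈ D := by
          obtain ⟨e', heD', heA', -⟩ := inter_one (hint D hD A hA hDA)
          rw [hAeq, Finset.mem_insert, Finset.mem_singleton] at heA'
          rcases heA' with h | h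
          · exact absurd (h ▸ heD') hpD
          · exact h ▸ heD'
        have hDC : D ≠ C := fun h => hpD (h ▸ hpC)
        have hrD : r ∈ D := by
          obtain ⟨e', heD', heC', -⟩ := inter_one (hint D hD C hC hDC)
          rw [hCeq, Finset.mem_insert, Finset.mem_singleton] at heC'
          rcases heC' with h | h
          · exact absurd (h ▸ heD') hpD
          · exact h ▸ heD'
        rw [hBeq]
        refine (Finset.eq_of_subset_of_card_le ?_ ?_).symm
        · intro z hz
          rw [Finset.mem_insert, Finset.mem_singleton] at hz
          rcases hz with h | h
          · exact h ▸ hqD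
          · exact h ▸ hrD
        · rw [h2 D hD, Finset.card_insert_of_notMem (by simp [Ne.symm hrq]),
            Finset.card_singleton]
    have hF3 : F.card ≤ 3 := by
      calc F.card ≤ ({A, B, C} : Finset (Finset (Fin n))).card := Finset.card_le_card hsub
        _ ≤ 3 := by
          refine (Finset.card_insert_le _ _).trans ?_
          have := Finset.card_insert_le B ({C} : Finset (Finset (Fin n)))
          simp only [Finset.card_singleton] at this
          omega
    have hn3 : 3 ≤ n := by
      have hcard : ({p, q, r} : Finset (Fin n)).card = 3 := by
        rw [Finset.card_insert_of_notMem (by simp [hpq, Ne.symm hrp]),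
          Finset.card_insert_of_notMem (by simp [Ne.symm hrq]), Finset.card_singleton]
      calc 3 = ({p, q, r} : Finset (Fin n)).card := hcard.symm
        _ ≤ Fintype.card (Fin n) := Finset.card_le_univ _
        _ = n := Fintype.card_fin n
    obtain ⟨m, rfl⟩ := hn
    omega

lemma clique_bound {n : ℕ} (hn : Even n) (hpos : 0 < n)
    (s : Finset {x : Fin n → ZMod 2 // Even (hammingDist x 0)})
    (hs : (halvedCube (Fin n)).IsClique (s : Set _)) : s.card ≤ n := by
  classical
  rcases s.eq_empty_or_nonempty with rfl | ⟨x0, hx0⟩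
  · exact Nat.zero_le _
  set g : {x : Fin n → ZMod 2 // Even (hammingDist x 0)} → Finset (Fin n) :=
    fun y => Finset.univ.filter (fun i => y.1 i ≠ x0.1 i) with hg
  have hginj : Function.Injective g := by
    intro y z h
    apply Subtype.ext; funext i
    have hi := Finset.ext_iff.mp h i
    simp only [hg, Finset.mem_filter, Finset.mem_univ, true_and] at hi
    have key : ∀ a b c : ZMod 2, ((a ≠ c) ↔ (b ≠ c)) → a = b := by decide
    exact key _ _ _ hi
  have hdist : ∀ y z, hammingDist y.1 z.1 = ((g y) ∆ (g z)).card := by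
    intro y z
    have hset : (Finset.univ.filter fun i => y.1 i ≠ z.1 i) = (g y) ∆ (g z) := by
      ext i
      simp only [hg, Finset.mem_filter, Finset.mem_univ, true_and, Finset.mem_symmDiff]
      have key : ∀ a b c : ZMod 2,
          (a ≠ b ↔ ((a ≠ c ∧ ¬ b ≠ c) ∨ (b ≠ c ∧ ¬ a ≠ c))) := by decide
      exact key _ _ _
    rw [← hset]
    rfl
  have hcard2 : ∀ y ∈ s.erase x0, (g y).card = 2 := by
    intro y hy
    have hyne : y ≠ x0 := (Finset.mem_erase.mp hy).1
    have hys : y ∈ s := (Finset.mem_erase.mp hy).2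
    have hadj := hs (by exact_mod_cast hys) (by exact_mod_cast hx0) hyne
    have : hammingDist y.1 x0.1 = 2 := hadj
    have hgx0 : g x0 = ∅ := by
      ext i; simp [hg]
    have := hdist y x0
    rw [hgx0, show (∅ : Finset (Fin n)) = ⊥ from rfl, symmDiff_bot] at this
    omega
  set F := (s.erase x0).image g with hF
  have hFcard : F.card = s.card - 1 := by
    rw [hF, Finset.card_image_of_injective _ hginj, Finset.card_erase_of_mem hx0]
  have h2 : ∀ A ∈ F, A.card = 2 := by
    intro A hA
    obtain ⟨y, hy, rfl⟩ := Finset.mem_image.mp hA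
    exact hcard2 y hy
  have hint : ∀ A ∈ F, ∀ B ∈ F, A ≠ B → (A ∩ B).card = 1 := by
    intro A hA B hB hAB
    obtain ⟨y, hy, rfl⟩ := Finset.mem_image.mp hA
    obtain ⟨z, hz, rfl⟩ := Finset.mem_image.mp hB
    have hyz : y ≠ z := fun h => hAB (h ▸ rfl)
    have hys : y ∈ s := (Finset.mem_erase.mp hy).2
    have hzs : z ∈ s := (Finset.mem_erase.mp hz).2
    have hadj := hs (by exact_mod_cast hys) (by exact_mod_cast hzs) hyz
    have hd2 : hammingDist y.1 z.1 = 2 := hadj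
    rw [hdist y z] at hd2
    have hsd : (g y) ∆ (g z) = ((g y) ∪ (g z)) \ ((g y) ∩ (g z)) := by
      rw [symmDiff_eq_sup_sdiff_inf]
      rfl
    have hsub : (g y) ∩ (g z) ⊆ (g y) ∪ (g z) :=
      (Finset.inter_subset_left).trans Finset.subset_union_left
    have hcu := Finset.card_union_add_card_inter (g y) (g z)
    have hcs : (((g y) ∪ (g z)) \ ((g y) ∩ (g z))).card =
        ((g y) ∪ (g z)).card - ((g y) ∩ (g z)).card := Finset.card_sdiff_of_subset hsub
    have hle := Finset.card_le_card hsub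
    rw [hsd, hcs] at hd2
    rw [hcard2 y hy, hcard2 z hz] at hcu
    omega
  have := pairs_card_le hn hpos F h2 hint
  have hpos' : 1 ≤ s.card := Finset.card_pos.mpr ⟨x0, hx0⟩
  omega

/-- for even `n > 0`, the halved `n`-cube has no clique of size
greater than `n`; and the Delsarte bound `1 - k/θ_min`, where `k = n(n-1)/2`
and `θ_min = -n/2`, equals `n`. In particular every Delsarte clique has size
exactly `n`. -/
theorem stmt3 (n : ℕ) (hn : Even n) (hpos : 0 < n) :
    (∀ s : Finset {x : Fin n → ZMod 2 // Even (hammingDist x 0)},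
      (halvedCube (Fin n)).IsClique (s : Set _) → s.card ≤ n) ∧
    (1 - ((n : ℝ) * (n - 1) / 2) / (-(n : ℝ) / 2) = n) := by
  constructor
  · exact fun s hs => clique_bound hn hpos s hs
  · have hn0 : (n : ℝ) ≠ 0 := Nat.cast_ne_zero.mpr hpos.ne'
    rw [div_div_div_cancel_right₀, div_neg, mul_comm, mul_div_assoc, div_self hn0,
      mul_one]
    · ring
    · norm_num
end

section
/- If (C₀,…,C_{k−1}) is an equitable k-partition of the hypercube H(n) with quotient matrix S, then its restriction to the even-weight vertices is an equitable k-partition of the halved n-cube, provided each restricted cell is nonempty; the (i,j) entry of its quotient matrix counts, for a vertex v ∈ C_i of even weight, the even-weight vertices of C_j at Hamming distance 2 from v, and this count depends only on i and j. -/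
open Finset

section aux
variable {n : ℕ}

private lemma zmod2_sub_ne {a b : ZMod 2} (h : a ≠ b) : a - b = 1 := by revert h a b; decide

private lemma zmod2_ne_to_eq {a b : ZMod 2} (h : a ≠ b) : b = a + 1 := by revert h a b; decide

private lemma zmod2_add_one_ne (a : ZMod 2) : a + 1 ≠ a := by revert a; decide

private lemma hd_cast (x y : Fin n → ZMod 2) :
    ((hammingDist x y : ℕ) : ZMod 2) = ∑ i, (x i - y i) := by
  rw [hammingDist, Finset.card_filter]
  push_cast
  apply Finset.sum_congr rfl
  intro i _
  by_cases h : x i = y i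
  · simp [h]
  · simp [h, zmod2_sub_ne h]

private lemma even_iff_cast (a : ℕ) : Even a ↔ (a : ZMod 2) = 0 := by
  rw [ZMod.natCast_eq_zero_iff]; exact even_iff_two_dvd

private lemma even_of_dist_two {v w : Fin n → ZMod 2} (hv : Even (hammingDist v 0))
    (h : hammingDist v w = 2) : Even (hammingDist w 0) := by
  rw [even_iff_cast] at hv ⊢
  rw [hd_cast] at hv ⊢
  have h2 : ((hammingDist v w : ℕ) : ZMod 2) = 0 := by rw [h]; decide
  rw [hd_cast] at h2
  simp only [Pi.zero_apply] at hv ⊢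
  have hpt : ∀ i : Fin n, w i - (0:ZMod 2) = (v i - 0) - (v i - w i) := fun i => by ring
  rw [Finset.sum_congr rfl (fun i _ => hpt i), Finset.sum_sub_distrib, hv, h2, sub_zero]

private def flp (v : Fin n → ZMod 2) (i : Fin n) : Fin n → ZMod 2 :=
  Function.update v i (v i + 1)

private lemma flip_inj (v : Fin n → ZMod 2) : Function.Injective (flp v) := by
  intro i j h
  by_contra hij
  have h2 := congrFun h i
  simp [flp, Function.update_apply, hij] at h2

private lemma hd_eq_one_iff (v u : Fin n → ZMod 2) :
    hammingDist v u = 1 ↔ ∃ i, u = flp v i := by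
  constructor
  · intro h
    rw [hammingDist, Finset.card_eq_one] at h
    obtain ⟨i, hi⟩ := h
    refine ⟨i, funext fun j => ?_⟩
    by_cases hij : j = i
    · subst hij
      have hj : j ∈ ({j} : Finset (Fin n)) := mem_singleton_self j
      rw [← hi, mem_filter] at hj
      have := zmod2_ne_to_eq hj.2
      simp [flp, Function.update_apply, this]
    · have hj : j ∉ ({i} : Finset (Fin n)) := by simp [hij]
      rw [← hi, mem_filter] at hj
      push_neg at hj
      have := hj (mem_univ j)
      simp [flp, Function.update_apply, hij, ← this]
  · rintro ⟨i, rfl⟩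
    rw [hammingDist]
    have : (univ.filter fun j => v j ≠ flp v i j) = {i} := by
      ext j
      by_cases hij : j = i
      · subst hij
        simp [flp, Function.update_apply, (zmod2_add_one_ne (v j)).symm]
      · simp [flp, Function.update_apply, hij]
    rw [this, card_singleton]

private lemma count_nbr (v : Fin n → ZMod 2) (P : (Fin n → ZMod 2) → Prop) [DecidablePred P] :
    #{u | hammingDist v u = 1 ∧ P u} = #{i | P (flp v i)} := by
  have : (univ.filter fun u => hammingDist v u = 1 ∧ P u)
      = (univ.filter fun i => P (flp v i)).image (flp v) := by
    ext u
    simp only [mem_filter, mem_univ, true_and, mem_image, hd_eq_one_iff]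
    constructor
    · rintro ⟨⟨i, rfl⟩, hP⟩; exact ⟨i, by simpa using hP, rfl⟩
    · rintro ⟨i, hi, rfl⟩; exact ⟨⟨i, rfl⟩, by simpa using hi⟩
  rw [this, Finset.card_image_of_injective _ (flip_inj v)]

private lemma hd_flip (v w : Fin n → ZMod 2) (i : Fin n) :
    hammingDist (flp v i) w =
      if v i = w i then hammingDist v w + 1 else hammingDist v w - 1 := by
  rw [hammingDist, hammingDist]
  split_ifs with h
  · have hset : (univ.filter fun j => flp v i j ≠ w j) = insert i (univ.filter fun j => v j ≠ w j) := by
      ext j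
      by_cases hij : j = i
      · subst hij
        simp [flp, Function.update_apply, h]
      · simp [flp, Function.update_apply, hij]
    rw [hset, Finset.card_insert_of_notMem (by simp [h])]
  · have hset : (univ.filter fun j => flp v i j ≠ w j) = (univ.filter fun j => v j ≠ w j).erase i := by
      ext j
      by_cases hij : j = i
      · subst hij
        simp [flp, Function.update_apply, zmod2_ne_to_eq h]
      · simp [flp, Function.update_apply, hij]
    rw [hset, Finset.card_erase_of_mem (by simp [h])]

private lemma common_count (v w : Fin n → ZMod 2) :
    #{u | hammingDist v u = 1 ∧ hammingDist u w = 1} =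
      if w = v then n else if hammingDist v w = 2 then 2 else 0 := by
  rw [count_nbr v (fun u => hammingDist u w = 1)]
  split_ifs with h0 h2
  · subst h0
    have : (univ.filter fun i => hammingDist (flp w i) w = 1) = univ := by
      ext i; simp [hd_flip, hammingDist_self]
    rw [this, card_univ, Fintype.card_fin]
  · have : (univ.filter fun i => hammingDist (flp v i) w = 1) = (univ.filter fun i => v i ≠ w i) := by
      ext i
      simp only [mem_filter, mem_univ, true_and, hd_flip]
      split_ifs with h
      · simp [h2, h]
      · simp [h, h2]
    rw [this, ← hammingDist, h2]
  · have : (univ.filter fun i => hammingDist (flp v i) w = 1) = ∅ := by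
      ext i
      simp only [mem_filter, mem_univ, true_and, notMem_empty, iff_false, hd_flip]
      split_ifs with h
      · intro hc
        have : hammingDist v w = 0 := by omega
        exact h0 (eq_of_hammingDist_eq_zero this).symm
      · intro hc
        exact h2 (by omega)
    rw [this, card_empty]



variable {V : Type*} [Fintype V] [DecidableEq V]

private lemma sum_count_comm {α β : Type*} (s : Finset α) (t : Finset β)
    (R : α → β → Prop) [∀ a b, Decidable (R a b)] :
    ∑ a ∈ s, (t.filter (fun b => R a b)).card = ∑ b ∈ t, (s.filter (fun a => R a b)).card := by
  simp only [Finset.card_filter]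
  exact Finset.sum_comm

private lemma key {n k : ℕ} (C : (Fin n → ZMod 2) → Fin k) (S : Fin k → Fin k → ℕ)
    (hC : IsEquitableK (cube (Fin n)) C S) (v : Fin n → ZMod 2) (j : Fin k) :
    2 * (univ.filter fun w => hammingDist v w = 2 ∧ C w = j).card
      + (if C v = j then n else 0) = ∑ l, S (C v) l * S l j := by
  classical
  set s : Finset (Fin n → ZMod 2) := univ.filter fun u => hammingDist v u = 1 with hs
  set t : Finset (Fin n → ZMod 2) := univ.filter fun w => C w = j with ht
  have hdc := sum_count_comm s t (fun u w => hammingDist u w = 1)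
  -- LHS of hdc equals ∑ l, S (C v) l * S l j
  have hL : ∑ u ∈ s, (t.filter (fun w => hammingDist u w = 1)).card
      = ∑ l, S (C v) l * S l j := by
    have h1 : ∀ u, (t.filter (fun w => hammingDist u w = 1)).card = S (C u) j := by
      intro u
      have he : t.filter (fun w => hammingDist u w = 1)
          = univ.filter (fun w => hammingDist u w = 1 ∧ C w = j) := by
        rw [ht, Finset.filter_filter]
        exact Finset.filter_congr (fun x _ => and_comm)
      rw [he]
      exact hC u j
    calc ∑ u ∈ s, (t.filter (fun w => hammingDist u w = 1)).card
        = ∑ u ∈ s, S (C u) j := Finset.sum_congr rfl (fun u _ => h1 u)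
      _ = ∑ l, ∑ u ∈ s with C u = l, S (C u) j := (Finset.sum_fiberwise s C _).symm
      _ = ∑ l, S (C v) l * S l j := by
          apply Finset.sum_congr rfl
          intro l _
          rw [Finset.sum_congr rfl (fun u hu => by
            rw [(Finset.mem_filter.1 hu).2]), Finset.sum_const, smul_eq_mul]
          congr 1
          have he : (s.filter fun u => C u = l)
              = univ.filter (fun u => hammingDist v u = 1 ∧ C u = l) := by
            rw [hs, Finset.filter_filter]
          rw [he]
          exact hC v l
  -- RHS of hdc equals goal LHS
  have hR : ∑ w ∈ t, (s.filter (fun u => hammingDist u w = 1)).card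
      = (if C v = j then n else 0)
        + 2 * (univ.filter fun w => hammingDist v w = 2 ∧ C w = j).card := by
    have h1 : ∀ w, (s.filter (fun u => hammingDist u w = 1)).card
        = (if w = v then n else 0) + (if hammingDist v w = 2 then 2 else 0) := by
      intro w
      have he : (s.filter fun u => hammingDist u w = 1)
          = univ.filter (fun u => hammingDist v u = 1 ∧ hammingDist u w = 1) := by
        rw [hs, Finset.filter_filter]
      rw [he, common_count v w]
      by_cases h : w = v
      · subst h; simp [hammingDist_self]
      · simp [h]
    rw [Finset.sum_congr rfl (fun w _ => h1 w), Finset.sum_add_distrib]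
    congr 1
    · rw [Finset.sum_ite_eq' t v (fun _ => n)]
      by_cases h : C v = j
      · simp [ht, h]
      · simp [ht, h]
    · rw [← Finset.sum_filter]
      rw [Finset.sum_const, smul_eq_mul, mul_comm]
      congr 1
      rw [ht, Finset.filter_filter]
      exact congrArg Finset.card (Finset.filter_congr (fun x _ => and_comm))
  omega

/-- the restriction of an equitable `k`-partition of the
hypercube `H(n)` to the even-weight words is an equitable `k`-partition of the
halved `n`-cube (provided all restricted cells are nonempty). -/
theorem stmt8 (n k : ℕ) (C : (Fin n → ZMod 2) → Fin k) (S : Fin k → Fin k → ℕ)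
    (hC : IsEquitableK (cube (Fin n)) C S)
    (hne : ∀ i : Fin k, ∃ v : {x : Fin n → ZMod 2 // Even (hammingDist x 0)}, C v.1 = i) :
    ∃ S' : Fin k → Fin k → ℕ,
      IsEquitableK (halvedCube (Fin n)) (fun v => C v.1) S' := by
  classical
  choose rep hrep using hne
  refine ⟨fun i j => (univ.filter fun w => hammingDist (rep i).1 w = 2 ∧ C w = j).card, ?_⟩
  intro v j
  have hsub : (Finset.univ.filter
        (fun w : {x : Fin n → ZMod 2 // Even (hammingDist x 0)} =>
          (halvedCube (Fin n)).Adj v w ∧ (fun v => C v.1) w = j)).card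
      = (univ.filter fun w => hammingDist v.1 w = 2 ∧ C w = j).card := by
    apply Finset.card_bij (fun w _ => w.1)
    · intro a ha
      rw [Finset.mem_filter] at ha ⊢
      exact ⟨mem_univ _, ha.2.1, ha.2.2⟩
    · intro a _ b _ h
      exact Subtype.ext h
    · intro b hb
      rw [Finset.mem_filter] at hb
      refine ⟨⟨b, even_of_dist_two v.2 hb.2.1⟩, ?_, rfl⟩
      rw [Finset.mem_filter]
      exact ⟨mem_univ _, hb.2.1, hb.2.2⟩
  have h1 := key C S hC v.1 j
  have h2 := key C S hC (rep (C v.1)).1 j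
  rw [hrep (C v.1)] at h2
  show (Finset.univ.filter
        (fun w : {x : Fin n → ZMod 2 // Even (hammingDist x 0)} =>
          (halvedCube (Fin n)).Adj v w ∧ (fun v => C v.1) w = j)).card
      = (univ.filter fun w => hammingDist (rep (C v.1)).1 w = 2 ∧ C w = j).card
  rw [hsub]
  by_cases h : C v.1 = j
  · simp only [h, if_true] at h1 h2 ⊢
    omega
  · simp only [h, if_false] at h1 h2
    omega
end aux
end
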